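/- arXiv:math/0403331 — 2 statements merged into one kernel-verified Lean document; each statement's English description precedes it below -/
import Mathlib

section
/- In the ring of formal power series in x with coefficients in ℤ[q], the series 𝒫(x) = Σ_{ν=0}^{∞} x^ν (1−x)(1−qx)⋯(1−q^ν x) satisfies the functional equation 𝒫(x) = 1 − qx² − q²x³ · 𝒫(qx), where 𝒫(qx) denotes the power series obtained from 𝒫(x) by rescaling x to qx. -/
/-- The parameter `q`, viewed as a constant of the power series ring `ℤ[q][[x]]`. -/
noncomputable def qc : PowerSeries (Polynomial ℤ) :=
  PowerSeries.C (R := Polynomial ℤ) Polynomial.X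

/-- The sum `∑_{ν=0}^∞ f ν` of a family of power series whose `ν`-th member is
divisible by `x^ν`. -/
noncomputable def seriesSum (f : ℕ → PowerSeries (Polynomial ℤ)) :
    PowerSeries (Polynomial ℤ) :=
  PowerSeries.mk fun d => PowerSeries.coeff (R := Polynomial ℤ) d (∑ ν ∈ Finset.range (d + 1), f ν)

/-- `𝒫(x) = ∑_{ν=0}^∞ x^ν (1-x)(1-qx)⋯(1-q^ν x) ∈ ℤ[q][[x]]`. -/
noncomputable def calP : PowerSeries (Polynomial ℤ) :=
  seriesSum fun ν =>
    PowerSeries.X ^ ν * ∏ i ∈ Finset.range (ν + 1), (1 - qc ^ i * PowerSeries.X)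

open PowerSeries Finset

namespace CalPAux

noncomputable def a (n : ℕ) : PowerSeries (Polynomial ℤ) :=
  X ^ n * ∏ i ∈ range (n + 1), (1 - qc ^ i * X)

noncomputable def Pp (n : ℕ) : PowerSeries (Polynomial ℤ) :=
  ∏ i ∈ range n, (1 - qc ^ (i + 1) * X)

noncomputable def b (n : ℕ) : PowerSeries (Polynomial ℤ) :=
  qc ^ (n + 2) * X ^ (n + 3) * Pp (n + 1)

noncomputable def r (n : ℕ) : PowerSeries (Polynomial ℤ) :=
  X ^ n * Pp n * (1 - qc ^ (n + 1) * X ^ 2)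

lemma a_eq (n : ℕ) : a n = X ^ n * (1 - X) * Pp n := by
  rw [a, Pp, Finset.prod_range_succ', pow_zero]
  ring

lemma Pp_succ (n : ℕ) : Pp (n + 1) = Pp n * (1 - qc ^ (n + 1) * X) := by
  rw [Pp, Finset.prod_range_succ, ← Pp]

lemma rescale_qc : PowerSeries.rescale Polynomial.X qc = qc := by
  ext n
  rw [qc, PowerSeries.coeff_rescale, PowerSeries.coeff_C]
  split_ifs with h
  · subst h; simp
  · simp

lemma step (n : ℕ) : r n - r (n + 1) = a n + b n := by
  simp only [r, a_eq, b, Pp_succ]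
  ring

lemma partial_sum (N : ℕ) :
    ∑ n ∈ range N, (a n + b n) = (1 - qc * X ^ 2) - r N := by
  induction N with
  | zero => simp [r, Pp]
  | succ N ih => rw [Finset.sum_range_succ, ih, ← step]; ring

lemma rescale_a (n : ℕ) :
    qc ^ 2 * X ^ 3 * PowerSeries.rescale Polynomial.X (a n) = b n := by
  have hres : PowerSeries.rescale Polynomial.X (a n) = qc ^ n * X ^ n * Pp (n + 1) := by
    rw [a, map_mul, map_pow, rescale_X, map_prod, Pp]
    congr 1
    · rw [mul_pow]; rfl
    · refine Finset.prod_congr rfl fun i _ => ?_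
      rw [map_sub, map_one, map_mul, rescale_X, map_pow]
      rw [rescale_qc, pow_succ, qc]
      ring
  rw [hres, b]
  ring

lemma coeff_a_zero {d n : ℕ} (h : d < n) :
    PowerSeries.coeff (R := Polynomial ℤ) d (a n) = 0 := by
  have : (X : PowerSeries (Polynomial ℤ)) ^ n ∣ a n := ⟨_, rfl⟩
  exact (PowerSeries.X_pow_dvd_iff.mp this) d h

lemma coeff_calP (d N : ℕ) (h : d < N) :
    PowerSeries.coeff (R := Polynomial ℤ) d calP
      = PowerSeries.coeff (R := Polynomial ℤ) d (∑ n ∈ range N, a n) := by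
  have h1 : PowerSeries.coeff (R := Polynomial ℤ) d calP
      = PowerSeries.coeff (R := Polynomial ℤ) d (∑ n ∈ range (d + 1), a n) := by
    rw [calP, seriesSum, PowerSeries.coeff_mk]; rfl
  rw [h1, map_sum, map_sum]
  refine Finset.sum_subset (Finset.range_subset_range.mpr h) fun n _ hn => ?_
  exact coeff_a_zero (by simpa using hn)

end CalPAux

set_option maxHeartbeats 1000000 in
open CalPAux in
/-- The functional equation `𝒫(x) = 1 - qx² - q²x³ 𝒫(qx)` in `ℤ[q][[x]]`, where `𝒫(qx)`
is obtained from `𝒫(x)` by rescaling `x` to `qx`. -/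
theorem calP_functional_equation :
    calP = 1 - qc * PowerSeries.X ^ 2
      - qc ^ 2 * PowerSeries.X ^ 3 * PowerSeries.rescale Polynomial.X calP := by
  apply PowerSeries.ext; intro d
  have hps := congrArg (PowerSeries.coeff (R := Polynomial ℤ) d) (partial_sum (d + 1))
  have hr : PowerSeries.coeff (R := Polynomial ℤ) d (r (d + 1)) = 0 := by
    have hdvd : (X : PowerSeries (Polynomial ℤ)) ^ (d + 1) ∣ r (d + 1) :=
      ⟨_, by rw [r, mul_assoc]⟩
    exact (PowerSeries.X_pow_dvd_iff.mp hdvd) d (Nat.lt_succ_self d)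
  rw [map_sub, map_sub, hr, sub_zero, Finset.sum_add_distrib, map_add] at hps
  have hb : PowerSeries.coeff (R := Polynomial ℤ) d (∑ n ∈ Finset.range (d + 1), b n)
      = PowerSeries.coeff (R := Polynomial ℤ) d
        (qc ^ 2 * X ^ 3 * PowerSeries.rescale Polynomial.X calP) := by
    have h1 : ∑ n ∈ Finset.range (d + 1), b n
        = qc ^ 2 * X ^ 3 *
          PowerSeries.rescale Polynomial.X (∑ n ∈ Finset.range (d + 1), a n) := by
      rw [map_sum, Finset.mul_sum]
      exact (Finset.sum_congr rfl fun n _ => (rescale_a n).symm)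
    rw [h1]
    have key : ∀ g : PowerSeries (Polynomial ℤ),
        PowerSeries.coeff (R := Polynomial ℤ) d (qc ^ 2 * X ^ 3 * g)
        = Polynomial.X ^ 2 *
          (if 3 ≤ d then PowerSeries.coeff (R := Polynomial ℤ) (d - 3) g else 0) := by
      intro g
      rw [mul_assoc, qc, ← map_pow, PowerSeries.coeff_C_mul, PowerSeries.coeff_X_pow_mul']
    rw [key, key]
    split_ifs with h3
    · rw [PowerSeries.coeff_rescale, PowerSeries.coeff_rescale,
        coeff_calP (d - 3) (d + 1) (by omega)]
    · rfl
  have hL : PowerSeries.coeff (R := Polynomial ℤ) d calP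
      = PowerSeries.coeff (R := Polynomial ℤ) d (∑ n ∈ Finset.range (d + 1), a n) :=
    coeff_calP d (d + 1) (Nat.lt_succ_self d)
  rw [map_sub, map_sub, hL, ← hb]
  linear_combination hps
end

section
/- In the ring of formal power series in x with coefficients in ℤ[q], the identity Σ_{ν=0}^{∞} x^ν (1−x)(1−qx)⋯(1−q^ν x) = 1 + Σ_{ℓ=1}^{∞} (−1)^ℓ ( q^{ℓ(3ℓ−1)/2} x^{3ℓ−1} + q^{ℓ(3ℓ+1)/2} x^{3ℓ} ) holds. -/
open PowerSeries

/-- `∏_{i<n} (1 - q^{k+i} x)` -/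
noncomputable def PP (k n : ℕ) : PowerSeries (Polynomial ℤ) :=
  ∏ i ∈ Finset.range n, (1 - qc ^ (k + i) * X)

/-- partial sum `∑_{n<N} q^{kn} x^n P(k,n+1)` -/
noncomputable def Sf (k N : ℕ) : PowerSeries (Polynomial ℤ) :=
  ∑ n ∈ Finset.range N, qc ^ (k * n) * X ^ n * PP k (n + 1)

lemma PP_last (k n : ℕ) : PP k (n + 1) = PP k n * (1 - qc ^ (k + n) * X) := by
  simp only [PP, Finset.prod_range_succ]

lemma PP_first (k n : ℕ) : PP k (n + 1) = (1 - qc ^ k * X) * PP (k + 1) n := by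
  simp only [PP]
  rw [Finset.prod_range_succ', add_zero, mul_comm]
  refine congrArg (HMul.hMul _) ?_
  exact Finset.prod_congr rfl fun i _ => by rw [show k + (i + 1) = k + 1 + i by omega]

lemma Sf_succ (k N : ℕ) : Sf k (N + 1) = Sf k N + qc ^ (k * N) * X ^ N * PP k (N + 1) := by
  simp only [Sf, Finset.sum_range_succ]

lemma keyfin (k M : ℕ) :
    Sf k (M + 2) = 1 - qc ^ (2 * k + 1) * X ^ 2 - qc ^ (3 * k + 2) * X ^ 3 * Sf (k + 1) M
      - qc ^ (k * (M + 2)) * X ^ (M + 2) * PP (k + 1) (M + 1) := by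
  induction M with
  | zero =>
      simp only [Sf, PP, Finset.sum_range_succ, Finset.sum_range_zero, Finset.prod_range_succ,
        Finset.prod_range_zero, Finset.sum_range_one, mul_zero, mul_one, pow_zero, one_mul,
        add_zero, zero_add, zero_mul, zero_sub]
      ring
  | succ M ih =>
      rw [show M + 1 + 2 = (M + 2) + 1 by omega]
      rw [Sf_succ k (M + 2), ih, Sf_succ (k + 1) M, PP_first k (M + 2)]
      rw [show M + 2 = M + 1 + 1 by omega]
      rw [PP_last (k + 1) (M + 1)]
      ring

lemma coeff_zero_of_X_pow_dvd {φ : PowerSeries (Polynomial ℤ)} {n d : ℕ}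
    (h : (X : PowerSeries (Polynomial ℤ)) ^ n ∣ φ) (hd : d < n) :
    coeff (R := Polynomial ℤ) d φ = 0 :=
  (X_pow_dvd_iff.mp h) d hd

lemma coeff_seriesSum_eq (f : ℕ → PowerSeries (Polynomial ℤ))
    (hf : ∀ ν, (X : PowerSeries (Polynomial ℤ)) ^ ν ∣ f ν) {d N : ℕ} (hdN : d < N) :
    coeff (R := Polynomial ℤ) d (seriesSum f) = coeff (R := Polynomial ℤ) d (∑ ν ∈ Finset.range N, f ν) := by
  rw [seriesSum, coeff_mk, map_sum, map_sum]
  refine Finset.sum_subset (Finset.range_subset_range.mpr (by omega)) fun ν _ hν => ?_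
  exact coeff_zero_of_X_pow_dvd (hf ν) (by simp at hν; omega)

/-- the series `s_k = ∑_n q^{kn} x^n ∏_{i≤n}(1-q^{k+i}x)` -/
noncomputable def sSer (k : ℕ) : PowerSeries (Polynomial ℤ) :=
  seriesSum fun n => qc ^ (k * n) * X ^ n * PP k (n + 1)

lemma sSer_dvd (k n : ℕ) : (X : PowerSeries (Polynomial ℤ)) ^ n ∣ qc ^ (k * n) * X ^ n * PP k (n + 1) :=
  dvd_mul_of_dvd_left (dvd_mul_left _ _) _

lemma coeff_sSer (k : ℕ) {d N : ℕ} (h : d < N) :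
    coeff (R := Polynomial ℤ) d (sSer k) = coeff (R := Polynomial ℤ) d (Sf k N) := by
  rw [sSer, Sf]
  exact coeff_seriesSum_eq _ (sSer_dvd k) h

lemma serRec (k : ℕ) :
    sSer k = 1 - qc ^ (2 * k + 1) * X ^ 2 - qc ^ (3 * k + 2) * X ^ 3 * sSer (k + 1) := by
  apply PowerSeries.ext; intro d
  have h1 : Sf k (d + 3) = 1 - qc ^ (2 * k + 1) * X ^ 2
      - qc ^ (3 * k + 2) * X ^ 3 * Sf (k + 1) (d + 1)
      - qc ^ (k * (d + 3)) * X ^ (d + 3) * PP (k + 1) (d + 2) := by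
    have := keyfin k (d + 1)
    rwa [show d + 1 + 2 = d + 3 by omega, show d + 1 + 1 = d + 2 by omega] at this
  have hRem : coeff (R := Polynomial ℤ) d (qc ^ (k * (d + 3)) * X ^ (d + 3) * PP (k + 1) (d + 2)) = 0 :=
    coeff_zero_of_X_pow_dvd (dvd_mul_of_dvd_left (dvd_mul_left _ _) _) (by omega)
  have hdvd : (X : PowerSeries (Polynomial ℤ)) ^ (d + 1) ∣ (sSer (k + 1) - Sf (k + 1) (d + 1)) := by
    refine X_pow_dvd_iff.mpr fun m hm => ?_
    rw [map_sub, coeff_sSer (k + 1) hm, sub_self]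
  have hz : coeff (R := Polynomial ℤ) d
      (qc ^ (3 * k + 2) * X ^ 3 * (sSer (k + 1) - Sf (k + 1) (d + 1))) = 0 :=
    coeff_zero_of_X_pow_dvd (Dvd.dvd.mul_left hdvd _) (by omega)
  have key : coeff (R := Polynomial ℤ) d
        (1 - qc ^ (2 * k + 1) * X ^ 2 - qc ^ (3 * k + 2) * X ^ 3 * sSer (k + 1))
      - coeff (R := Polynomial ℤ) d
        (1 - qc ^ (2 * k + 1) * X ^ 2 - qc ^ (3 * k + 2) * X ^ 3 * Sf (k + 1) (d + 1)) = 0 := by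
    rw [← map_sub]
    rw [show (1 - qc ^ (2 * k + 1) * X ^ 2 - qc ^ (3 * k + 2) * X ^ 3 * sSer (k + 1))
        - (1 - qc ^ (2 * k + 1) * X ^ 2 - qc ^ (3 * k + 2) * X ^ 3 * Sf (k + 1) (d + 1))
        = -(qc ^ (3 * k + 2) * X ^ 3 * (sSer (k + 1) - Sf (k + 1) (d + 1))) by ring]
    rw [map_neg, hz, neg_zero]
  rw [coeff_sSer k (show d < d + 3 by omega), h1, map_sub, hRem, sub_zero]
  exact (sub_eq_zero.mp key).symm

/-- `bexp ℓ = ℓ(3ℓ+1)/2` defined recursively. -/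
def bexp : ℕ → ℕ
  | 0 => 0
  | (m + 1) => bexp m + (3 * m + 2)

lemma bexp_two (m : ℕ) : 2 * bexp m = m * (3 * m + 1) := by
  induction m with
  | zero => rfl
  | succ m ih =>
      show 2 * (bexp m + (3 * m + 2)) = (m + 1) * (3 * (m + 1) + 1)
      rw [mul_add, ih]; ring

lemma bexp_two' (m : ℕ) : 2 * (bexp m + 2 * m + 1) = (m + 1) * (3 * m + 2) := by
  have := bexp_two m
  zify at this ⊢
  linear_combination this

lemma exp_e2 (m : ℕ) : (m + 1) * (3 * (m + 1) + 1) / 2 = bexp (m + 1) := by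
  rw [← bexp_two (m + 1)]
  omega

lemma exp_e1 (m : ℕ) : (m + 1) * (3 * (m + 1) - 1) / 2 = bexp m + 2 * m + 1 := by
  rw [show 3 * (m + 1) - 1 = 3 * m + 2 by omega, ← bexp_two']
  omega

/-- the `m`-th term of the right-hand side. -/
noncomputable def rterm (m : ℕ) : PowerSeries (Polynomial ℤ) :=
  (-1) ^ (m + 1) *
    (qc ^ ((m + 1) * (3 * (m + 1) - 1) / 2) * X ^ (3 * (m + 1) - 1)
      + qc ^ ((m + 1) * (3 * (m + 1) + 1) / 2) * X ^ (3 * (m + 1)))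

noncomputable def Pen (L : ℕ) : PowerSeries (Polynomial ℤ) :=
  ∑ j ∈ Finset.range L, (-1) ^ j * qc ^ (bexp j) * X ^ (3 * j) * (1 - qc ^ (2 * j + 1) * X ^ 2)

lemma iterLem (ℓ : ℕ) :
    sSer 0 = Pen ℓ + (-1) ^ ℓ * qc ^ (bexp ℓ) * X ^ (3 * ℓ) * sSer ℓ := by
  induction ℓ with
  | zero => simp [Pen, bexp]
  | succ ℓ ih =>
      rw [ih, serRec ℓ]
      rw [show Pen (ℓ + 1) = Pen ℓ
          + (-1) ^ ℓ * qc ^ (bexp ℓ) * X ^ (3 * ℓ) * (1 - qc ^ (2 * ℓ + 1) * X ^ 2)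
          from by simp only [Pen, Finset.sum_range_succ]]
      rw [show bexp (ℓ + 1) = bexp ℓ + (3 * ℓ + 2) from rfl]
      ring

lemma penShift (M : ℕ) :
    Pen (M + 1) = 1 + (∑ m ∈ Finset.range M, rterm m)
      + (-1) ^ (M + 1) * qc ^ (bexp M + 2 * M + 1) * X ^ (3 * M + 2) := by
  induction M with
  | zero =>
      simp only [Pen, Finset.sum_range_succ, Finset.sum_range_zero, bexp]
      ring_nf
  | succ M ih =>
      rw [show Pen (M + 1 + 1) = Pen (M + 1)
          + (-1) ^ (M + 1) * qc ^ (bexp (M + 1)) * X ^ (3 * (M + 1))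
            * (1 - qc ^ (2 * (M + 1) + 1) * X ^ 2)
          from by simp only [Pen, Finset.sum_range_succ]]
      rw [ih, Finset.sum_range_succ]
      rw [show rterm M = (-1) ^ (M + 1) *
          (qc ^ (bexp M + 2 * M + 1) * X ^ (3 * M + 2)
            + qc ^ (bexp (M + 1)) * X ^ (3 * (M + 1)))
          from by rw [rterm, exp_e1, exp_e2, show 3 * (M + 1) - 1 = 3 * M + 2 by omega]]
      rw [show bexp (M + 1) = bexp M + (3 * M + 2) from rfl]
      ring

lemma rterm_dvd (m : ℕ) : (X : PowerSeries (Polynomial ℤ)) ^ (3 * m + 2) ∣ rterm m := by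
  rw [rterm]
  refine Dvd.dvd.mul_left (dvd_add ?_ ?_) _
  · exact Dvd.dvd.mul_left (pow_dvd_pow X (by omega)) _
  · exact Dvd.dvd.mul_left (pow_dvd_pow X (by omega)) _

/-- `∑_{ν=0}^∞ x^ν (1-x)(1-qx)⋯(1-q^ν x)
      = 1 + ∑_{ℓ=1}^∞ (-1)^ℓ (q^{ℓ(3ℓ-1)/2} x^{3ℓ-1} + q^{ℓ(3ℓ+1)/2} x^{3ℓ})`
in `ℤ[q][[x]]`; the sum over `ℓ ≥ 1` is realized by summing over `ℓ = m + 1`, `m ≥ 0`. -/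
theorem calP_pentagonal_expansion :
    seriesSum (fun ν =>
        PowerSeries.X ^ ν * ∏ i ∈ Finset.range (ν + 1), (1 - qc ^ i * PowerSeries.X)) =
      1 + seriesSum (fun m =>
        (-1) ^ (m + 1) *
          (qc ^ ((m + 1) * (3 * (m + 1) - 1) / 2) * PowerSeries.X ^ (3 * (m + 1) - 1)
            + qc ^ ((m + 1) * (3 * (m + 1) + 1) / 2) * PowerSeries.X ^ (3 * (m + 1)))) := by
  have hL : seriesSum (fun ν =>
      PowerSeries.X ^ ν * ∏ i ∈ Finset.range (ν + 1), (1 - qc ^ i * PowerSeries.X)) = sSer 0 := by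
    rw [sSer]
    refine congrArg seriesSum ?_
    funext n
    simp [PP]
  rw [hL]
  show sSer 0 = 1 + seriesSum rterm
  apply PowerSeries.ext; intro d
  rw [iterLem (d + 1), map_add]
  have htail : coeff (R := Polynomial ℤ) d
      ((-1) ^ (d + 1) * qc ^ (bexp (d + 1)) * X ^ (3 * (d + 1)) * sSer (d + 1)) = 0 :=
    coeff_zero_of_X_pow_dvd (dvd_mul_of_dvd_left (dvd_mul_left _ _) _) (by omega)
  rw [htail, add_zero, penShift d, map_add, map_add]
  have hb : coeff (R := Polynomial ℤ) d
      ((-1) ^ (d + 1) * qc ^ (bexp d + 2 * d + 1) * X ^ (3 * d + 2)) = 0 :=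
    coeff_zero_of_X_pow_dvd (dvd_mul_left _ _) (by omega)
  rw [hb, add_zero, map_add]
  have : coeff (R := Polynomial ℤ) d (seriesSum rterm)
      = coeff (R := Polynomial ℤ) d (∑ m ∈ Finset.range (d + 1), rterm m) := by
    rw [seriesSum, coeff_mk]
  rw [this, Finset.sum_range_succ, map_add,
    coeff_zero_of_X_pow_dvd (rterm_dvd d) (show d < 3 * d + 2 by omega), add_zero]
end
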